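/- arXiv:1303.5998 — 2 statements merged into one kernel-verified Lean document; each statement's English description precedes it below -/
import Mathlib

section
/- Let S = D_{2^k} ≀ C₂ with k ≥ 3 be the wreath product of a dihedral group of order 2^k by C₂. Then S has 2-rank exactly 4, i.e. the largest elementary abelian 2-subgroup of S has order 2⁴. -/
open DihedralGroup Subgroup

lemma zmod_half {m : ℕ} (hm : 0 < m) (x : ZMod (2*m)) (hx : x + x = 0) :
    x = 0 ∨ x = (m : ZMod (2*m)) := by
  haveI : NeZero (2*m) := ⟨by omega⟩
  have hv : x.val < 2*m := ZMod.val_lt x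
  have hcast : ((x.val + x.val : ℕ) : ZMod (2*m)) = 0 := by
    push_cast [ZMod.natCast_val, ZMod.cast_id]; exact hx
  obtain ⟨c, hc⟩ := (ZMod.natCast_eq_zero_iff _ _).mp hcast
  have hval : x.val = 0 ∨ x.val = m := by
    rcases Nat.lt_or_ge c 2 with h | h
    · interval_cases c <;> omega
    · exfalso; have : 2*m*2 ≤ 2*m*c := Nat.mul_le_mul_left _ h; omega
  have hx2 : x = ((x.val : ℕ) : ZMod (2*m)) := by rw [ZMod.natCast_val, ZMod.cast_id]
  rcases hval with h | h
  · left; rw [hx2, h, Nat.cast_zero]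
  · right; rw [hx2, h]

lemma zmod_mm {m : ℕ} : (m : ZMod (2*m)) + m = 0 := by
  have h := ZMod.natCast_self (2*m)
  push_cast at h
  linear_combination h

lemma dihedral_bound {m : ℕ} (hm : 0 < m) (E : Subgroup (DihedralGroup (2*m)))
    (hE : ∀ g ∈ E, g ^ 2 = 1) : Nat.card E ≤ 4 := by
  haveI : NeZero (2*m) := ⟨by omega⟩
  have hr : ∀ j : ZMod (2*m), r j ∈ E → j = 0 ∨ j = (m : ZMod (2*m)) := by
    intro j hj
    have h1 := hE _ hj
    rw [pow_two, r_mul_r, one_def] at h1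
    exact zmod_half hm j (r.inj h1)
  have key : ∃ s : Set (DihedralGroup (2*m)), (E : Set _) ⊆ s ∧ s.ncard ≤ 4 := by
    by_cases hsr : ∃ i, sr i ∈ E
    · obtain ⟨i₀, hi₀⟩ := hsr
      refine ⟨{r 0, r (m : ZMod (2*m)), sr i₀, sr (i₀ + (m : ZMod (2*m)))}, ?_, ?_⟩
      · intro g hg
        cases g with
        | r j => rcases hr j hg with h | h <;> simp [h]
        | sr j =>
          have hmem : sr j * sr i₀ ∈ E := mul_mem hg hi₀
          rw [sr_mul_sr] at hmem
          rcases hr _ hmem with h | h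
          · have hj : j = i₀ := (sub_eq_zero.mp h).symm
            simp [hj]
          · have hj : j = i₀ + (m : ZMod (2*m)) := by
              linear_combination -h - (zmod_mm (m := m))
            simp [hj]
      · refine le_trans (Set.ncard_insert_le _ _) ?_
        have : ({r (m : ZMod (2*m)), sr i₀, sr (i₀ + (m : ZMod (2*m)))} : Set _).ncard ≤ 3 := by
          refine le_trans (Set.ncard_insert_le _ _) ?_
          have : ({sr i₀, sr (i₀ + (m : ZMod (2*m)))} : Set _).ncard ≤ 2 := by
            refine le_trans (Set.ncard_insert_le _ _) ?_
            simp [Set.ncard_singleton]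
          omega
        omega
    · refine ⟨{r 0, r (m : ZMod (2*m))}, ?_, ?_⟩
      · intro g hg
        cases g with
        | r j => rcases hr j hg with h | h <;> simp [h]
        | sr j => exact absurd ⟨j, hg⟩ hsr
      · refine le_trans (Set.ncard_insert_le _ _) ?_
        simp [Set.ncard_singleton]
  obtain ⟨s, hsub, hcard⟩ := key
  calc Nat.card E = (E : Set _).ncard := by rw [← Nat.card_coe_set_eq]; rfl
    _ ≤ s.ncard := Set.ncard_le_ncard hsub s.toFinite
    _ ≤ 4 := hcard
lemma dihedral_klein {m : ℕ} (hm : 0 < m) :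
    ∃ V : Subgroup (DihedralGroup (2*m)), Nat.card V = 4 ∧ ∀ g ∈ V, g ^ 2 = 1 := by
  haveI : NeZero (2*m) := ⟨by omega⟩
  set c : ZMod (2*m) := (m : ZMod (2*m)) with hc
  have hcc : c + c = 0 := zmod_mm
  have hnegc : -c = c := by linear_combination -hcc
  have hc0 : c ≠ 0 := by
    intro h
    have : (2*m) ∣ m := (ZMod.natCast_eq_zero_iff _ _).mp h
    have := Nat.le_of_dvd hm this
    omega
  have hsq : ∀ g ∈ ({1, r c, sr 0, sr c} : Set (DihedralGroup (2*m))),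
      ∀ h ∈ ({1, r c, sr 0, sr c} : Set (DihedralGroup (2*m))),
      g * h ∈ ({1, r c, sr 0, sr c} : Set (DihedralGroup (2*m))) := by
    intro g hg h hh
    simp only [Set.mem_insert_iff, Set.mem_singleton_iff] at hg hh ⊢
    rcases hg with rfl | rfl | rfl | rfl <;> rcases hh with rfl | rfl | rfl | rfl <;>
      simp [-r_zero, one_def, r_mul_r, r_mul_sr, sr_mul_r, sr_mul_sr, hcc, hnegc,
        sub_eq_add_neg] <;> tauto
  refine ⟨{ carrier := {1, r c, sr 0, sr c},
            one_mem' := by simp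
            mul_mem' := fun ha hb => hsq _ ha _ hb
            inv_mem' := by
              intro a ha
              have h2 : a * a = 1 := by
                simp only [Set.mem_insert_iff, Set.mem_singleton_iff] at ha
                rcases ha with rfl | rfl | rfl | rfl <;>
                  simp [-r_zero, one_def, r_mul_r, sr_mul_sr, hcc, sub_self]
              have : a⁻¹ = a := inv_eq_of_mul_eq_one_right h2
              simpa [this] using ha }, ?_, ?_⟩
  · have hne1 : (1 : DihedralGroup (2*m)) ≠ r c := by
      rw [one_def]; intro h; exact hc0 (r.inj h).symm
    have h2 : Nat.card ({1, r c, sr 0, sr c} : Set (DihedralGroup (2*m))) = 4 := by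
      rw [Nat.card_coe_set_eq]
      rw [Set.ncard_insert_of_notMem (by simp [-r_zero, one_def, (Ne.symm hc0)]),
          Set.ncard_insert_of_notMem (by simp),
          Set.ncard_insert_of_notMem (by simp [Ne.symm hc0]),
          Set.ncard_singleton]
    exact h2
  · intro g hg
    have : g ∈ ({1, r c, sr 0, sr c} : Set (DihedralGroup (2*m))) := hg
    rw [pow_two]
    simp only [Set.mem_insert_iff, Set.mem_singleton_iff] at this
    rcases this with rfl | rfl | rfl | rfl <;>
      simp [-r_zero, one_def, r_mul_r, sr_mul_sr, hcc, sub_self]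
open DihedralGroup Subgroup

lemma dihedral_bound' {n : ℕ} (h : ∃ m, 0 < m ∧ n = 2*m) (E : Subgroup (DihedralGroup n))
    (hE : ∀ g ∈ E, g ^ 2 = 1) : Nat.card E ≤ 4 := by
  obtain ⟨m, hm, rfl⟩ := h; exact dihedral_bound hm E hE

lemma dihedral_klein' {n : ℕ} (h : ∃ m, 0 < m ∧ n = 2*m) :
    ∃ V : Subgroup (DihedralGroup n), Nat.card V = 4 ∧ ∀ g ∈ V, g ^ 2 = 1 := by
  obtain ⟨m, hm, rfl⟩ := h; exact dihedral_klein hm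

lemma sub_card_ncard {G : Type*} [Group G] (H : Subgroup G) :
    Nat.card H = (H : Set G).ncard := by rw [← Nat.card_coe_set_eq]; rfl

def IsDihedralWreathC2 (G : Type*) [Group G] (k : ℕ) : Prop :=
  ∃ (A B : Subgroup G) (t : G),
    Nonempty (A ≃* DihedralGroup (2 ^ (k - 1))) ∧
    Nonempty (B ≃* DihedralGroup (2 ^ (k - 1))) ∧
    A ⊓ B = ⊥ ∧ (∀ a ∈ A, ∀ b ∈ B, Commute a b) ∧ t ^ 2 = 1 ∧
    Subgroup.map (MulAut.conj t).toMonoidHom A = B ∧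
    Subgroup.closure ((A : Set G) ∪ (B : Set G) ∪ {t}) = ⊤ ∧
    Nat.card G = 2 * Nat.card A * Nat.card B

/-- Let `S = D_{2^k} ≀ C₂` with `k ≥ 3`.  Then `S` has `2`-rank exactly `4`:
it contains an elementary abelian subgroup of order `2⁴`, and every elementary
abelian `2`-subgroup has order at most `2⁴`. -/
theorem stmt_15 (k : ℕ) (hk : 3 ≤ k) (S : Type*) [Group S] [Finite S]
    (hS : IsDihedralWreathC2 S k) :
    (∃ E : Subgroup S, Nat.card E = 2 ^ 4 ∧ ∀ g ∈ E, g ^ 2 = 1) ∧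
    ∀ E : Subgroup S, (∀ g ∈ E, g ^ 2 = 1) → Nat.card E ≤ 2 ^ 4 := by
  obtain ⟨A, B, t, ⟨eA⟩, ⟨eB⟩, hABbot, hcomm, ht2, hconj, hgen, hcard⟩ := hS
  have hex : ∃ m, 0 < m ∧ 2^(k-1) = 2*m := by
    refine ⟨2^(k-2), pow_pos two_pos _, ?_⟩
    rw [← pow_succ']
    congr 1
    omega
  have ht2' : t * t = 1 := by rw [← pow_two]; exact ht2
  have htinv : t⁻¹ = t := inv_eq_of_mul_eq_one_right ht2'
  have htA : ∀ a ∈ A, t * a * t⁻¹ ∈ B := by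
    intro a ha
    rw [← hconj]
    exact ⟨a, ha, rfl⟩
  have htB : ∀ b ∈ B, t * b * t⁻¹ ∈ A := by
    intro b hb
    rw [← hconj] at hb
    obtain ⟨a, ha, rfl⟩ := hb
    have heq : t * ((MulAut.conj t).toMonoidHom a) * t⁻¹ = a := by
      simp only [MulAut.conj_apply, MulEquiv.coe_toMonoidHom]
      rw [htinv]
      calc t * (t * a * t) * t = (t * t) * a * (t * t) := by group
        _ = a := by rw [ht2', one_mul, mul_one]
    rw [heq]
    exact ha
  -- the hom from the product
  let f : ↥A × ↥B →* S :=
    { toFun := fun p => (p.1 : S) * (p.2 : S)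
      map_one' := by simp
      map_mul' := by
        intro p q
        have hc : Commute (q.1 : S) (p.2 : S) := hcomm _ q.1.2 _ p.2.2
        simp only [Prod.fst_mul, Prod.snd_mul, Subgroup.coe_mul]
        calc (p.1 : S) * q.1 * ((p.2 : S) * q.2)
            = (p.1 : S) * ((q.1 : S) * p.2) * q.2 := by group
          _ = (p.1 : S) * ((p.2 : S) * q.1) * q.2 := by rw [hc.eq]
          _ = (p.1 : S) * p.2 * ((q.1 : S) * q.2) := by group }
  have hfapp : ∀ p : ↥A × ↥B, f p = (p.1 : S) * (p.2 : S) := fun _ => rfl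
  have hfinj : Function.Injective f := by
    rw [injective_iff_map_eq_one]
    rintro ⟨a, b⟩ hab
    rw [hfapp] at hab
    have ha : (a : S) ∈ A ⊓ B := by
      refine ⟨a.2, ?_⟩
      have : (a : S) = (b : S)⁻¹ := eq_inv_of_mul_eq_one_left hab
      rw [this]; exact B.inv_mem b.2
    rw [hABbot] at ha
    have hb : (b : S) = 1 := by
      have := eq_inv_of_mul_eq_one_left hab
      have ha1 : (a : S) = 1 := ha
      rw [ha1] at this
      simpa using this.symm
    have ha1 : (a : S) = 1 := ha
    ext <;> simp [ha1, hb]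
  set N := f.range with hN
  have hAN : ∀ a ∈ A, a ∈ N := fun a ha => ⟨(⟨a, ha⟩, 1), by simp [hfapp]⟩
  have hBN : ∀ b ∈ B, b ∈ N := fun b hb => ⟨(1, ⟨b, hb⟩), by simp [hfapp]⟩
  have htN : ∀ g ∈ N, t * g * t⁻¹ ∈ N := by
    rintro g ⟨⟨a, b⟩, rfl⟩
    rw [hfapp]
    have h1 : t * ((a : S) * b) * t⁻¹ = (t * a * t⁻¹) * (t * b * t⁻¹) := by group
    rw [h1]
    have hb' : (t * (b : S) * t⁻¹) ∈ A := htB _ b.2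
    have ha' : (t * (a : S) * t⁻¹) ∈ B := htA _ a.2
    have hc : Commute (t * (a : S) * t⁻¹) (t * (b : S) * t⁻¹) := (hcomm _ hb' _ ha').symm
    rw [hc.eq]
    exact mul_mem (hAN _ hb') (hBN _ ha')
  have hcover : ∀ g : S, g ∈ N ∨ g * t ∈ N := by
    have hKsub : ∀ g h : S, (g ∈ N ∨ g * t ∈ N) → (h ∈ N ∨ h * t ∈ N) →
        (g * h ∈ N ∨ (g * h) * t ∈ N) := by
      rintro g h (hg | hg) (hh | hh)
      · exact Or.inl (mul_mem hg hh)
      · right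
        have : (g * h) * t = g * (h * t) := by group
        rw [this]; exact mul_mem hg hh
      · right
        have heq : (g * h) * t = (g * t) * (t * h * t⁻¹) := by
          rw [htinv]
          calc g * h * t = g * (t * t) * h * t := by rw [ht2']; group
            _ = (g * t) * (t * h * t) := by group
        rw [heq]
        exact mul_mem hg (htN _ hh)
      · left
        have heq : g * h = (g * t) * (t * (h * t) * t⁻¹) := by
          rw [htinv]
          calc g * h = g * (t * t) * h * (t * t) := by rw [ht2']; group
            _ = (g * t) * (t * (h * t) * t) := by group
        rw [heq]
        exact mul_mem hg (htN _ hh)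
    have hKinv : ∀ g : S, (g ∈ N ∨ g * t ∈ N) → (g⁻¹ ∈ N ∨ g⁻¹ * t ∈ N) := by
      rintro g (hg | hg)
      · exact Or.inl (inv_mem hg)
      · right
        have : g⁻¹ * t = t * (g * t)⁻¹ * t⁻¹ := by rw [htinv]; group
        rw [this]
        exact htN _ (inv_mem hg)
    let K : Subgroup S :=
      { carrier := {g | g ∈ N ∨ g * t ∈ N}
        one_mem' := Or.inl (one_mem N)
        mul_mem' := fun {g h} hg hh => hKsub g h hg hh
        inv_mem' := fun {g} hg => hKinv g hg }
    intro g
    have hgK : g ∈ K := by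
      have htop : (⊤ : Subgroup S) ≤ K := by
        rw [← hgen]
        refine (Subgroup.closure_le K).mpr ?_
        rintro x (hx | hx)
        · rcases hx with hx | hx
          · exact Or.inl (hAN _ hx)
          · exact Or.inl (hBN _ hx)
        · rcases hx with rfl
          exact Or.inr (by rw [ht2']; exact one_mem N)
      exact htop trivial
    exact hgK
  -- bounds for elementary abelian subgroups of A and B
  have hboundA : ∀ W : Subgroup ↥A, (∀ w ∈ W, w ^ 2 = 1) → Nat.card W ≤ 4 := by
    intro W hW
    have hc : Nat.card W = Nat.card (W.map eA.toMonoidHom) :=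
      Nat.card_congr (Subgroup.equivMapOfInjective W _ eA.injective).toEquiv
    rw [hc]
    refine dihedral_bound' hex _ ?_
    rintro g ⟨w, hw, rfl⟩
    rw [← map_pow, hW w hw, map_one]
  have hboundB : ∀ W : Subgroup ↥B, (∀ w ∈ W, w ^ 2 = 1) → Nat.card W ≤ 4 := by
    intro W hW
    have hc : Nat.card W = Nat.card (W.map eB.toMonoidHom) :=
      Nat.card_congr (Subgroup.equivMapOfInjective W _ eB.injective).toEquiv
    rw [hc]
    refine dihedral_bound' hex _ ?_
    rintro g ⟨w, hw, rfl⟩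
    rw [← map_pow, hW w hw, map_one]
  constructor
  · obtain ⟨VD, hVD4, hVDsq⟩ := dihedral_klein' hex
    set WA : Subgroup ↥A := VD.map eA.symm.toMonoidHom with hWA
    have hWAcard : Nat.card WA = 4 := by
      rw [← hVD4]
      exact (Nat.card_congr (Subgroup.equivMapOfInjective VD _ eA.symm.injective).toEquiv).symm
    have hWAsq : ∀ w ∈ WA, w ^ 2 = 1 := by
      rintro w ⟨v, hv, rfl⟩
      rw [← map_pow, hVDsq v hv, map_one]
    set VA : Subgroup S := WA.map A.subtype with hVA
    have hVAle : VA ≤ A := Subgroup.map_subtype_le WA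
    have hVAcard : Nat.card VA = 4 := by
      rw [← hWAcard]
      exact (Nat.card_congr (Subgroup.equivMapOfInjective WA _ A.subtype_injective).toEquiv).symm
    have hVAsq : ∀ g ∈ VA, g ^ 2 = 1 := by
      rintro g ⟨w, hw, rfl⟩
      have h := hWAsq w hw
      calc (A.subtype w) ^ 2 = A.subtype (w ^ 2) := by rw [map_pow]
        _ = 1 := by rw [h, map_one]
    set VB : Subgroup S := VA.map (MulAut.conj t).toMonoidHom with hVB
    have hVBle : VB ≤ B := by
      rw [← hconj]; exact Subgroup.map_mono hVAle
    have hVBcard : Nat.card VB = 4 := by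
      rw [← hVAcard]
      exact (Nat.card_congr (Subgroup.equivMapOfInjective VA _ (MulAut.conj t).injective).toEquiv).symm
    have hVBsq : ∀ g ∈ VB, g ^ 2 = 1 := by
      rintro g ⟨x, hx, rfl⟩
      rw [← map_pow, hVAsq x hx, map_one]
    set P₀ := (VA.subgroupOf A).prod (VB.subgroupOf B) with hP₀
    refine ⟨P₀.map f, ?_, ?_⟩
    · have h1 : Nat.card (P₀.map f) = Nat.card P₀ :=
        (Nat.card_congr (Subgroup.equivMapOfInjective P₀ f hfinj).toEquiv).symm
      have h2 : Nat.card P₀ = Nat.card (VA.subgroupOf A) * Nat.card (VB.subgroupOf B) := by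
        rw [hP₀, Nat.card_congr (Subgroup.prodEquiv _ _).toEquiv, Nat.card_prod]
      have h3 : Nat.card (VA.subgroupOf A) = 4 := by
        rw [Nat.card_congr (Subgroup.subgroupOfEquivOfLe hVAle).toEquiv]; exact hVAcard
      have h4 : Nat.card (VB.subgroupOf B) = 4 := by
        rw [Nat.card_congr (Subgroup.subgroupOfEquivOfLe hVBle).toEquiv]; exact hVBcard
      rw [h1, h2, h3, h4]; norm_num
    · rintro g ⟨p, hp, rfl⟩
      obtain ⟨hp1, hp2⟩ := (Subgroup.mem_prod).mp hp
      have ha : ((p.1 : S)) ^ 2 = 1 := hVAsq _ (Subgroup.mem_subgroupOf.mp hp1)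
      have hb : ((p.2 : S)) ^ 2 = 1 := hVBsq _ (Subgroup.mem_subgroupOf.mp hp2)
      have hc : Commute ((p.1 : S)) ((p.2 : S)) := hcomm _ p.1.2 _ p.2.2
      rw [hfapp, hc.mul_pow, ha, hb, one_mul]
  · -- UPPER BOUND
    intro E hE
    have hEinv : ∀ g ∈ E, g⁻¹ = g := by
      intro g hg
      have := hE g hg
      rw [pow_two] at this
      exact inv_eq_of_mul_eq_one_right this
    have habel : ∀ x ∈ E, ∀ y ∈ E, x * y = y * x := by
      intro x hx y hy
      have h1 : (x * y)⁻¹ = x * y := hEinv _ (mul_mem hx hy)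
      rw [mul_inv_rev, hEinv _ hx, hEinv _ hy] at h1
      exact h1.symm
    set P := E.comap f with hP
    have hPfst : ∀ p ∈ P, ((p.1 : S)) ^ 2 = 1 ∧ ((p.2 : S)) ^ 2 = 1 := by
      rintro ⟨a, b⟩ hp
      have hfE : (a : S) * b ∈ E := hp
      have hsq := hE _ hfE
      have hc : Commute (a : S) (b : S) := hcomm _ a.2 _ b.2
      rw [hc.mul_pow] at hsq
      have ha : (a : S) ^ 2 ∈ A ⊓ B := by
        refine ⟨pow_mem a.2 2, ?_⟩
        have : (a : S) ^ 2 = ((b : S) ^ 2)⁻¹ := eq_inv_of_mul_eq_one_left hsq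
        rw [this]; exact B.inv_mem (pow_mem b.2 2)
      rw [hABbot] at ha
      have ha1 : (a : S) ^ 2 = 1 := ha
      refine ⟨ha1, ?_⟩
      rw [ha1, one_mul] at hsq
      exact hsq
    have hPcard : Nat.card P ≤ 16 := by
      have hle : P ≤ (P.map (MonoidHom.fst ↥A ↥B)).prod (P.map (MonoidHom.snd ↥A ↥B)) := by
        intro p hp
        exact ⟨⟨p, hp, rfl⟩, ⟨p, hp, rfl⟩⟩
      have h1 : Nat.card P ≤ Nat.card ((P.map (MonoidHom.fst ↥A ↥B)).prod (P.map (MonoidHom.snd ↥A ↥B))) :=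
        Subgroup.card_le_of_le hle
      have h2 : Nat.card ((P.map (MonoidHom.fst ↥A ↥B)).prod (P.map (MonoidHom.snd ↥A ↥B)))
          = Nat.card (P.map (MonoidHom.fst ↥A ↥B)) * Nat.card (P.map (MonoidHom.snd ↥A ↥B)) := by
        rw [Nat.card_congr (Subgroup.prodEquiv _ _).toEquiv, Nat.card_prod]
      have h3 : Nat.card (P.map (MonoidHom.fst ↥A ↥B)) ≤ 4 := by
        refine hboundA _ ?_
        rintro w ⟨p, hp, rfl⟩
        have := (hPfst p hp).1
        ext
        push_cast
        exact this
      have h4 : Nat.card (P.map (MonoidHom.snd ↥A ↥B)) ≤ 4 := by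
        refine hboundB _ ?_
        rintro w ⟨p, hp, rfl⟩
        have := (hPfst p hp).2
        ext
        push_cast
        exact this
      calc Nat.card P ≤ _ := h1
        _ = _ := h2
        _ ≤ 4 * 4 := Nat.mul_le_mul h3 h4
        _ = 16 := rfl
    have hsetEN : ((E ⊓ N : Subgroup S) : Set S) = f '' (P : Set (↥A × ↥B)) := by
      ext g
      constructor
      · rintro ⟨hgE, p, rfl⟩
        exact ⟨p, hgE, rfl⟩
      · rintro ⟨p, hp, rfl⟩
        exact ⟨hp, p, rfl⟩
    have hcardEN : Nat.card ↥(E ⊓ N) = Nat.card P := by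
      rw [sub_card_ncard, hsetEN, Set.ncard_image_of_injective _ hfinj, ← sub_card_ncard]
    by_cases hEN : (E : Set S) ⊆ (N : Set S)
    · have : E ⊓ N = E := inf_eq_left.mpr hEN
      rw [← this, hcardEN]
      calc Nat.card P ≤ 16 := hPcard
        _ = 2 ^ 4 := rfl
    · -- there is g ∈ E outside N
      obtain ⟨g, hgE, hgN⟩ : ∃ g ∈ E, g ∉ N := by
        by_contra h
        push_neg at h
        exact hEN fun x hx => h x hx
      have hgt : g * t ∈ N := (hcover g).resolve_left hgN
      have hginv : g⁻¹ = g := hEinv g hgE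
      -- small kernel: if (1,b) ∈ P then b = 1
      have hker : ∀ p ∈ P, p.1 = 1 → p.2 = 1 := by
        rintro ⟨a, b⟩ hp ha1
        simp only at ha1
        subst ha1
        have hbE : (b : S) ∈ E := by
          have : f (1, b) ∈ E := hp
          rw [hfapp] at this
          simpa using this
        obtain ⟨⟨a₀, b₀⟩, hq⟩ := hgt
        rw [hfapp] at hq
        have hgdef : g = (a₀ : S) * b₀ * t := by
          have : g * t * t = (a₀ : S) * b₀ * t := by rw [hq]
          rw [mul_assoc, ht2', mul_one] at this
          exact this
        set a₁ : S := t * b * t⁻¹ with ha₁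
        have ha₁A : a₁ ∈ A := htB _ b.2
        have hcomm₁ : Commute a₁ (b₀ : S) := hcomm _ ha₁A _ b₀.2
        have hcompute : g * b * g⁻¹ = (a₀ : S) * a₁ * (a₀ : S)⁻¹ := by
          rw [hgdef]
          have : (a₀ : S) * b₀ * t * b * ((a₀ : S) * b₀ * t)⁻¹
              = (a₀ : S) * ((b₀ : S) * a₁ * (b₀ : S)⁻¹) * (a₀ : S)⁻¹ := by
            rw [ha₁]; group
          rw [this, ← hcomm₁.eq]
          group
        have hbA : (b : S) ∈ A := by
          have hcb : g * b = b * g := habel _ hgE _ hbE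
          have : (b : S) = g * b * g⁻¹ := by rw [hcb]; group
          rw [this, hcompute]
          exact mul_mem (mul_mem a₀.2 ha₁A) (inv_mem a₀.2)
        have : (b : S) ∈ A ⊓ B := ⟨hbA, b.2⟩
        rw [hABbot] at this
        have : (b : S) = 1 := this
        ext
        simp [this]
      have hinjP : Set.InjOn (Prod.fst) (P : Set (↥A × ↥B)) := by
        intro p hp q hq hpq
        have hmem : p * q⁻¹ ∈ P := mul_mem hp (inv_mem hq)
        have h1 : (p * q⁻¹).1 = 1 := by
          simp [Prod.fst_mul, hpq]
        have h2 := hker _ hmem h1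
        have : p = q := by
          have hpq1 : p * q⁻¹ = 1 := Prod.ext h1 h2
          exact mul_inv_eq_one.mp hpq1
        exact this
      have hPsmall : Nat.card P ≤ 4 := by
        have h1 : Nat.card P = Nat.card (P.map (MonoidHom.fst ↥A ↥B)) := by
          rw [sub_card_ncard, sub_card_ncard]
          have : ((P.map (MonoidHom.fst ↥A ↥B)) : Set ↥A) = Prod.fst '' (P : Set (↥A × ↥B)) := by
            ext x
            exact ⟨fun ⟨p, hp, he⟩ => ⟨p, hp, he⟩, fun ⟨p, hp, he⟩ => ⟨p, hp, he⟩⟩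
          rw [this, Set.ncard_image_of_injOn hinjP]
        rw [h1]
        refine hboundA _ ?_
        rintro w ⟨p, hp, rfl⟩
        have := (hPfst p hp).1
        ext
        push_cast
        exact this
      -- cover E by (E⊓N) and (E⊓N)*g
      have hcoverE : (E : Set S) ⊆ ((E ⊓ N : Subgroup S) : Set S) ∪
          (fun x => x * g) '' ((E ⊓ N : Subgroup S) : Set S) := by
        intro e heE
        rcases hcover e with heN | hetN
        · exact Or.inl ⟨heE, heN⟩
        · right
          have hegN : e * g ∈ N := by
            have heq : e * g = (e * t) * (t * (g * t) * t⁻¹) := by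
              rw [htinv]
              calc e * g = e * (t * t) * g * (t * t) := by rw [ht2']; group
                _ = (e * t) * (t * (g * t) * t) := by group
            rw [heq]
            exact mul_mem hetN (htN _ hgt)
          refine ⟨e * g, ⟨mul_mem heE hgE, hegN⟩, ?_⟩
          calc e * g * g = e * (g * g) := by group
            _ = e := by rw [← pow_two, hE g hgE, mul_one]
      have hcardE : Nat.card E ≤ 8 := by
        rw [sub_card_ncard]
        calc (E : Set S).ncard
            ≤ (((E ⊓ N : Subgroup S) : Set S) ∪ (fun x => x * g) '' ((E ⊓ N : Subgroup S) : Set S)).ncard :=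
              Set.ncard_le_ncard hcoverE (Set.Finite.union (Set.toFinite _) (Set.toFinite _))
          _ ≤ ((E ⊓ N : Subgroup S) : Set S).ncard + ((fun x => x * g) '' ((E ⊓ N : Subgroup S) : Set S)).ncard :=
              Set.ncard_union_le _ _
          _ = ((E ⊓ N : Subgroup S) : Set S).ncard + ((E ⊓ N : Subgroup S) : Set S).ncard := by
              rw [Set.ncard_image_of_injective _ (mul_left_injective g)]
          _ ≤ 4 + 4 := by
              have := hcardEN
              rw [sub_card_ncard] at this
              omega
          _ = 8 := rfl
      calc Nat.card E ≤ 8 := hcardE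
        _ ≤ 2 ^ 4 := by norm_num
end

section
/- Let G be a finite group, N ⊴ G a normal subgroup, p a prime, and X = C_S(N/O_{p'}(N)) for S ∈ Syl_p(G), i.e. X is the set of elements of S acting trivially on N/O_{p'}(N). Then [T, X] = 1 where T = S ∩ N, and for any subgroup H ≤ N normalized by X one has [H, X] ≤ O_{p'}(H). -/
/-- The `p'`-core `O_{p'}(G)`: the largest normal subgroup of the finite group `G`
of order prime to `p` (formulated as the join of all normal subgroups of order
coprime to `p`). -/
def pPrimeCore (p : ℕ) (G : Type*) [Group G] : Subgroup G :=
  ⨆ (H : Subgroup G) (_ : H.Normal) (_ : (Nat.card H).Coprime p), H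

open scoped commutatorElement

lemma card_sup_dvd_aux17 {G : Type*} [Group G] [Finite G] (H K : Subgroup G) [K.Normal] :
    Nat.card ↥(H ⊔ K) ∣ Nat.card H * Nat.card K := by
  have h1 : Nat.card ↥(H ⊔ K) =
      Nat.card (↥(H ⊔ K) ⧸ K.subgroupOf (H ⊔ K)) * Nat.card (K.subgroupOf (H ⊔ K)) :=
    Subgroup.card_eq_card_quotient_mul_card_subgroup _
  have h2 : Nat.card (↥(H ⊔ K) ⧸ K.subgroupOf (H ⊔ K)) = Nat.card (H ⧸ K.subgroupOf H) :=
    Nat.card_congr (QuotientGroup.quotientInfEquivProdNormalQuotient H K).toEquiv.symm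
  have h3 : Nat.card (K.subgroupOf (H ⊔ K)) = Nat.card K :=
    Nat.card_congr (Subgroup.subgroupOfEquivOfLe le_sup_right).toEquiv
  have h4 : Nat.card (H ⧸ K.subgroupOf H) ∣ Nat.card H :=
    ⟨_, Subgroup.card_eq_card_quotient_mul_card_subgroup (K.subgroupOf H)⟩
  rw [h1, h2, h3]
  exact Nat.mul_dvd_mul h4 dvd_rfl

lemma pPrimeCore_props_aux17 (p : ℕ) (G : Type*) [Group G] [Finite G] :
    (pPrimeCore p G).Normal ∧ (Nat.card (pPrimeCore p G)).Coprime p := by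
  classical
  have := Fintype.ofFinite G
  set P : Subgroup G → Prop := fun H => H.Normal ∧ (Nat.card H).Coprime p with hP
  have hsup : ∀ s : Finset (Subgroup G), (∀ H ∈ s, P H) → P (s.sup id) := by
    intro s
    induction s using Finset.induction_on with
    | empty =>
      intro _
      rw [Finset.sup_empty]
      exact ⟨inferInstance, by simp [Subgroup.card_bot]⟩
    | insert a s' hx ih =>
      intro hs
      rw [Finset.sup_insert]
      have hA : P a := hs a (Finset.mem_insert_self a s')
      have hB : P (s'.sup id) := ih fun H hH => hs H (Finset.mem_insert_of_mem hH)
      have : (s'.sup id).Normal := hB.1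
      have : a.Normal := hA.1
      refine ⟨Subgroup.sup_normal a (s'.sup id), ?_⟩
      have hdvd := card_sup_dvd_aux17 a (s'.sup id)
      exact Nat.Coprime.coprime_dvd_left hdvd (Nat.Coprime.mul hA.2 hB.2)
  set F : Finset (Subgroup G) := Finset.univ.filter P with hF
  have heq : pPrimeCore p G = F.sup id := by
    apply le_antisymm
    · refine iSup_le fun H => iSup_le fun hN => iSup_le fun hc => ?_
      exact Finset.le_sup (f := id) (Finset.mem_filter.mpr ⟨Finset.mem_univ H, hN, hc⟩)
    · refine Finset.sup_le fun H hH => ?_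
      simp only [hF, Finset.mem_filter] at hH
      exact le_iSup_of_le H (le_iSup_of_le hH.2.1 (le_iSup_of_le hH.2.2 le_rfl))
  rw [heq]
  exact hsup F fun H hH => (Finset.mem_filter.mp hH).2

/-- Let `G` be a finite group, `N ⊴ G`, `p` a prime, `S ∈ Syl_p(G)`, and
`X = C_S(N/O_{p'}(N))` the set of elements of `S` acting trivially on
`N/O_{p'}(N)`.  Then `[T, X] = 1` where `T = S ∩ N`, and for any subgroup
`H ≤ N` normalized by `X` one has `[H, X] ≤ O_{p'}(H)`. -/
theorem stmt_17 (p : ℕ) (hp : p.Prime) (G : Type*) [Group G] [Finite G]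
    (N : Subgroup G) (hN : N.Normal) (S : Sylow p G) (X : Set G)
    (hX : X = {s | s ∈ (S : Subgroup G) ∧
      ∀ n ∈ N, ⁅n, s⁆ ∈ Subgroup.map N.subtype (pPrimeCore p N)}) :
    (∀ t ∈ (S : Subgroup G) ⊓ N, ∀ s ∈ X, Commute t s) ∧
    (∀ H : Subgroup G, H ≤ N →
      (∀ s ∈ X, Subgroup.map (MulAut.conj s).toMonoidHom H = H) →
      ∀ h ∈ H, ∀ s ∈ X, ⁅h, s⁆ ∈ Subgroup.map H.subtype (pPrimeCore p H)) := by
  haveI : Fact p.Prime := ⟨hp⟩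
  obtain ⟨hnorm, hcop⟩ := pPrimeCore_props_aux17 p N
  set M : Subgroup G := Subgroup.map N.subtype (pPrimeCore p N) with hM
  have hcardM : Nat.card M = Nat.card (pPrimeCore p N) :=
    (Nat.card_congr ((pPrimeCore p N).equivMapOfInjective _ N.subtype_injective).toEquiv).symm
  have hcopM : (Nat.card M).Coprime p := hcardM ▸ hcop
  have hMnorm : ∀ n ∈ N, ∀ m ∈ M, n * m * n⁻¹ ∈ M := by
    intro n hn m hm
    obtain ⟨x, hx, rfl⟩ := hm
    exact ⟨⟨n, hn⟩ * x * ⟨n, hn⟩⁻¹, hnorm.conj_mem x hx ⟨n, hn⟩, rfl⟩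
  constructor
  · rintro t ht s hs
    rw [Subgroup.mem_inf] at ht
    rw [hX] at hs
    obtain ⟨hsS, hsC⟩ := hs
    have hcM : ⁅t, s⁆ ∈ M := hsC t ht.2
    have hcS : ⁅t, s⁆ ∈ (S : Subgroup G) := by
      rw [commutatorElement_def]
      exact mul_mem (mul_mem (mul_mem ht.1 hsS) (inv_mem ht.1)) (inv_mem hsS)
    obtain ⟨k, hk⟩ := IsPGroup.exists_card_eq S.2
    have h1 : orderOf ⁅t, s⁆ ∣ p ^ k := hk ▸ Subgroup.orderOf_dvd_natCard _ hcS
    have h2 : orderOf ⁅t, s⁆ ∣ Nat.card M := Subgroup.orderOf_dvd_natCard _ hcM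
    have h3 : (Nat.card M).Coprime (p ^ k) := Nat.Coprime.pow_right _ hcopM
    have h4 : orderOf ⁅t, s⁆ ∣ 1 := by
      have := Nat.dvd_gcd h2 h1
      rwa [Nat.Coprime.gcd_eq_one h3] at this
    rw [← commutatorElement_eq_one_iff_commute]
    exact orderOf_eq_one_iff.mp (Nat.dvd_one.mp h4)
  · intro H hHN hHX h hh s hs
    have hs' := hs
    rw [hX] at hs'
    obtain ⟨hsS, hsC⟩ := hs'
    -- ⁅h, s⁆ ∈ H
    have hconj : s * h⁻¹ * s⁻¹ ∈ H := by
      have := hHX s hs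
      rw [← this]
      exact ⟨h⁻¹, inv_mem hh, by simp [MulAut.conj]⟩
    have hinH : ⁅h, s⁆ ∈ H := by
      rw [commutatorElement_def]
      have : h * s * h⁻¹ * s⁻¹ = h * (s * h⁻¹ * s⁻¹) := by group
      rw [this]
      exact mul_mem hh hconj
    have hinM : ⁅h, s⁆ ∈ M := hsC h (hHN hh)
    -- K = M ∩ H viewed in H is a normal p'-subgroup of H
    set K : Subgroup H := M.subgroupOf H with hK
    have hKnorm : K.Normal := by
      constructor
      intro n hn g
      rw [Subgroup.mem_subgroupOf] at hn ⊢
      exact hMnorm g (hHN g.2) n hn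
    have hKcard : Nat.card K ∣ Nat.card M := by
      have e1 : Nat.card K = Nat.card (K.map H.subtype) :=
        Nat.card_congr (K.equivMapOfInjective _ H.subtype_injective).toEquiv
      rw [e1, Subgroup.subgroupOf_map_subtype]
      exact Subgroup.card_dvd_of_le inf_le_left
    have hKcop : (Nat.card K).Coprime p := Nat.Coprime.coprime_dvd_left hKcard hcopM
    have hKle : K ≤ pPrimeCore p H :=
      le_iSup_of_le K (le_iSup_of_le hKnorm (le_iSup_of_le hKcop le_rfl))
    refine ⟨⟨⁅h, s⁆, hinH⟩, hKle ?_, rfl⟩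
    rw [Subgroup.mem_subgroupOf]
    exact hinM
end
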